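/- Let (g_i)_{i∈ℤ} be the circle on (g_1, g_0) in a group G. If the circle is finite of cardinality e (i.e. g_{i+e} = g_i for all i), then ⟨g_1 g_0⟩^e = ⟨g_0 g_1⟩^e, where ⟨ab⟩^e is the alternating product with e terms. -/

import Mathlib

/-- The alternating product `⟨ab⟩^e = a b a b ⋯` with `e` factors. -/
def altProd {G : Type*} [Monoid G] (a b : G) : ℕ → G
  | 0 => 1
  | n + 1 => a * altProd b a n

private lemma altProd_even {G : Type*} [Monoid G] (a b : G) (m : ℕ) :
    altProd a b (2 * m) = (a * b) ^ m := by
  induction m with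
  | zero => simp [altProd]
  | succ m ih =>
    rw [show 2 * (m + 1) = (2 * m) + 1 + 1 by ring, altProd, altProd, ih, pow_succ']
    rw [mul_assoc]

private lemma altProd_odd {G : Type*} [Monoid G] (a b : G) (m : ℕ) :
    altProd a b (2 * m + 1) = (a * b) ^ m * a := by
  induction m with
  | zero => simp [altProd]
  | succ m ih =>
    rw [show 2 * (m + 1) + 1 = (2 * m + 1) + 1 + 1 by ring, altProd, altProd, ih, pow_succ']
    rw [mul_assoc, mul_assoc]

/-- if the circle on `(g 1, g 0)` is `e`-periodic, then
`⟨g₁g₀⟩^e = ⟨g₀g₁⟩^e`. -/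
theorem alt_rel_of_circle_period {G : Type*} [Group G] (g : ℤ → G)
    (hcirc : ∀ i : ℤ, g (i + 2) = g (i + 1) * g i * (g (i + 1))⁻¹)
    (e : ℕ) (hper : ∀ i : ℤ, g (i + e) = g i) :
    altProd (g 1) (g 0) e = altProd (g 0) (g 1) e := by
  set γ := g 1 * g 0 with hγ
  have key : ∀ i : ℤ, g (i + 1 + 1) * g (i + 1) = g (i + 1) * g i := by
    intro i
    rw [show i + 1 + 1 = i + 2 by ring, hcirc i]
    group
  have hA : ∀ i : ℤ, g (i + 1) * g i = γ := by
    intro i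
    induction i using Int.induction_on with
    | zero => simp [hγ]
    | succ n ih => rw [key]; exact ih
    | pred n ih =>
      have h := key (-(n + 1) : ℤ)
      rw [show (-(n + 1) : ℤ) + 1 = -n by ring] at h
      rw [show (-(n : ℤ) - 1 + 1) = -(n : ℤ) by ring,
        show (-(n : ℤ) - 1) = -((n : ℤ) + 1) by ring, ← h]
      exact ih
  have hconj : ∀ i : ℤ, g (i + 2) = γ * g i * γ⁻¹ := by
    intro i
    have h1 : g (i + 1) = γ * (g i)⁻¹ := by
      have := hA i; rw [← this]; group
    rw [hcirc i, h1]
    group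
  have hE : ∀ k : ℕ, ∀ i : ℤ, g (i + 2 * k) = γ ^ k * g i * (γ ^ k)⁻¹ := by
    intro k
    induction k with
    | zero => intro i; simp
    | succ k ih =>
      intro i
      rw [show i + 2 * ((k + 1 : ℕ) : ℤ) = (i + 2 * k) + 2 by push_cast; ring,
        hconj, ih i, pow_succ]
      group
  rcases Nat.even_or_odd e with ⟨m, hm⟩ | ⟨m, hm⟩
  · -- e = 2m even
    have hm' : e = 2 * m := by omega
    subst hm'
    have hp := hper 0
    rw [show ((0 : ℤ) + ((2 * m : ℕ) : ℤ)) = (0 : ℤ) + 2 * ((m : ℕ) : ℤ) by push_cast; ring,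
      hE m 0] at hp
    have hcomm : γ ^ m * g 0 = g 0 * γ ^ m := mul_inv_eq_iff_eq_mul.mp hp
    rw [altProd_even, altProd_even, ← hγ]
    have h01 : (g 0 * g 1) ^ m = g 0 * (g 1 * g 0) ^ m * (g 0)⁻¹ := by
      rw [← conj_pow]; group
    rw [h01, ← hγ, ← hcomm]
    group
  · -- e = 2m+1 odd
    subst hm
    have hp := hper 0
    rw [show ((0 : ℤ) + ((2 * m + 1 : ℕ) : ℤ)) = (1 : ℤ) + 2 * ((m : ℕ) : ℤ) by push_cast; ring,
      hE m 1] at hp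
    have hkey : γ ^ m * g 1 = g 0 * γ ^ m := by
      rw [← hp]; group
    rw [altProd_odd, altProd_odd, ← hγ]
    have h01 : (g 0 * g 1) ^ m * g 0 = g 0 * γ ^ m := by
      rw [show (g 0 * g 1) ^ m = g 0 * (g 1 * g 0) ^ m * (g 0)⁻¹ by rw [← conj_pow]; group,
        ← hγ]
      group
    rw [h01, ← hkey]
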